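/- Any symmetric bilinear form B on se(3) ≅ ℝ³ × ℝ³ satisfying the invariance condition B([s,s₁],s₂) + B(s₁,[s,s₂]) = 0 for all twists s, s₁, s₂ is of the form B((ω₁,v₁),(ω₂,v₂)) = -2α(ω₁·ω₂) + β(ω₁·v₂ + v₁·ω₂) for some real α, β. -/

import Mathlib

open Matrix

/-- The Lie bracket on `se(3) ≅ ℝ³ × ℝ³`. -/
def seBracket (a b : (Fin 3 → ℝ) × (Fin 3 → ℝ)) : (Fin 3 → ℝ) × (Fin 3 → ℝ) :=
  (crossProduct a.1 b.1, crossProduct a.1 b.2 + crossProduct a.2 b.1)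

set_option maxHeartbeats 1000000 in
theorem invariant_forms_classification
    (B : LinearMap.BilinForm ℝ ((Fin 3 → ℝ) × (Fin 3 → ℝ)))
    (hsymm : ∀ x y, B x y = B y x)
    (hinv : ∀ s s₁ s₂, B (seBracket s s₁) s₂ + B s₁ (seBracket s s₂) = 0) :
    ∃ α β : ℝ, ∀ ω₁ v₁ ω₂ v₂ : Fin 3 → ℝ,
      B (ω₁, v₁) (ω₂, v₂) = -2 * α * (ω₁ ⬝ᵥ ω₂) + β * (ω₁ ⬝ᵥ v₂) + β * (v₁ ⬝ᵥ ω₂) := by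
  set e0 : Fin 3 → ℝ := ![1,0,0] with he0
  set e1 : Fin 3 → ℝ := ![0,1,0] with he1
  set e2 : Fin 3 → ℝ := ![0,0,1] with he2
  -- cross product values
  have c00 : crossProduct e0 e0 = 0 := by funext i; fin_cases i <;> simp [cross_apply, he0]
  have c11 : crossProduct e1 e1 = 0 := by funext i; fin_cases i <;> simp [cross_apply, he1]
  have c22 : crossProduct e2 e2 = 0 := by funext i; fin_cases i <;> simp [cross_apply, he2]
  have c01 : crossProduct e0 e1 = e2 := by
    funext i; fin_cases i <;> simp [cross_apply, he0, he1, he2]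
  have c12 : crossProduct e1 e2 = e0 := by
    funext i; fin_cases i <;> simp [cross_apply, he0, he1, he2]
  have c20 : crossProduct e2 e0 = e1 := by
    funext i; fin_cases i <;> simp [cross_apply, he0, he1, he2]
  have c10 : crossProduct e1 e0 = -e2 := by
    funext i; fin_cases i <;> simp [cross_apply, he0, he1, he2]
  have c21 : crossProduct e2 e1 = -e0 := by
    funext i; fin_cases i <;> simp [cross_apply, he0, he1, he2]
  have c02 : crossProduct e0 e2 = -e1 := by
    funext i; fin_cases i <;> simp [cross_apply, he0, he1, he2]
  have hnegP : ∀ x : Fin 3 → ℝ, ((-x, (0 : Fin 3 → ℝ)) : (Fin 3 → ℝ) × (Fin 3 → ℝ))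
      = -(x, (0 : Fin 3 → ℝ)) := by intro x; simp [Prod.neg_mk]
  have hnegQ : ∀ x : Fin 3 → ℝ, (((0 : Fin 3 → ℝ), -x) : (Fin 3 → ℝ) × (Fin 3 → ℝ))
      = -((0 : Fin 3 → ℝ), x) := by intro x; simp [Prod.neg_mk]
  -- invariance consequences
  have hPP : ∀ x y z : Fin 3 → ℝ,
      B (crossProduct x y, 0) (z, 0) = - B (y, 0) (crossProduct x z, 0) := by
    intro x y z
    have := hinv (x, 0) (y, 0) (z, 0)
    simp only [seBracket, map_zero, LinearMap.zero_apply, add_zero, zero_add] at this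
    linarith
  have hPQ : ∀ x y z : Fin 3 → ℝ,
      B (crossProduct x y, 0) (0, z) = - B (y, 0) (0, crossProduct x z) := by
    intro x y z
    have := hinv (x, 0) (y, 0) (0, z)
    simp only [seBracket, map_zero, LinearMap.zero_apply, add_zero, zero_add] at this
    linarith
  have hQ : ∀ u w z : Fin 3 → ℝ, B (0, crossProduct u w) (0, z) = 0 := by
    intro u w z
    have := hinv ((0 : Fin 3 → ℝ), u) (w, 0) ((0 : Fin 3 → ℝ), z)
    simpa [seBracket, Prod.mk_zero_zero] using this
  set a : ℝ := B (e0, 0) (e0, 0) with ha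
  set b : ℝ := B (e0, 0) (0, e0) with hb
  -- A values
  have A00 : B (e0, 0) (e0, 0) = a := rfl
  have A22 : B (e2, 0) (e2, 0) = a := by
    have := hPP e1 e2 e0; rw [c12, c10, hnegP, map_neg] at this
    rw [ha]; linarith
  have A11 : B (e1, 0) (e1, 0) = a := by
    have := hPP e2 e0 e1; rw [c20, c21, hnegP, map_neg] at this
    rw [ha]; linarith
  have A01 : B (e0, 0) (e1, 0) = 0 := by
    have := hPP e1 e2 e1; rw [c12, c11] at this; simpa [Prod.mk_zero_zero] using this
  have A12 : B (e1, 0) (e2, 0) = 0 := by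
    have := hPP e2 e0 e2; rw [c20, c22] at this; simpa [Prod.mk_zero_zero] using this
  have A02 : B (e0, 0) (e2, 0) = 0 := by
    have := hPP e2 e1 e2; rw [c21, c22, hnegP, map_neg, LinearMap.neg_apply] at this
    simp only [Prod.mk_zero_zero, map_zero, neg_zero, neg_neg] at this
    linarith [this]
  have A10 : B (e1, 0) (e0, 0) = 0 := (hsymm _ _).trans A01
  have A21 : B (e2, 0) (e1, 0) = 0 := (hsymm _ _).trans A12
  have A20 : B (e2, 0) (e0, 0) = 0 := (hsymm _ _).trans A02
  -- C values
  have C00 : B (e0, 0) (0, e0) = b := rfl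
  have C11 : B (e1, 0) (0, e1) = b := by
    have := hPQ e2 e0 e1; rw [c20, c21, hnegQ, map_neg] at this
    rw [hb]; linarith
  have C22 : B (e2, 0) (0, e2) = b := by
    have := hPQ e1 e2 e0; rw [c12, c10, hnegQ, map_neg] at this
    rw [hb]; linarith
  have C01 : B (e0, 0) (0, e1) = 0 := by
    have := hPQ e1 e2 e1; rw [c12, c11] at this; simpa [Prod.mk_zero_zero] using this
  have C10 : B (e1, 0) (0, e0) = 0 := by
    have := hPQ e0 e2 e0; rw [c02, c00, hnegP, map_neg, LinearMap.neg_apply] at this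
    simp only [Prod.mk_zero_zero, map_zero, neg_zero, neg_neg] at this
    linarith [this]
  have C02 : B (e0, 0) (0, e2) = 0 := by
    have := hPQ e2 e1 e2; rw [c21, c22, hnegP, map_neg, LinearMap.neg_apply] at this
    simp only [Prod.mk_zero_zero, map_zero, neg_zero, neg_neg] at this
    linarith [this]
  have C20 : B (e2, 0) (0, e0) = 0 := by
    have := hPQ e0 e1 e0; rw [c01, c00] at this; simpa [Prod.mk_zero_zero] using this
  have C12 : B (e1, 0) (0, e2) = 0 := by
    have := hPQ e2 e0 e2; rw [c20, c22] at this; simpa [Prod.mk_zero_zero] using this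
  have C21 : B (e2, 0) (0, e1) = 0 := by
    have := hPQ e1 e0 e1; rw [c10, c11, hnegP, map_neg, LinearMap.neg_apply] at this
    simp only [Prod.mk_zero_zero, map_zero, neg_zero, neg_neg] at this
    linarith [this]
  -- C' values (by symmetry)
  have C'00 : B (0, e0) (e0, 0) = b := (hsymm _ _).trans C00
  have C'11 : B (0, e1) (e1, 0) = b := (hsymm _ _).trans C11
  have C'22 : B (0, e2) (e2, 0) = b := (hsymm _ _).trans C22
  have C'01 : B (0, e0) (e1, 0) = 0 := (hsymm _ _).trans C10
  have C'10 : B (0, e1) (e0, 0) = 0 := (hsymm _ _).trans C01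
  have C'02 : B (0, e0) (e2, 0) = 0 := (hsymm _ _).trans C20
  have C'20 : B (0, e2) (e0, 0) = 0 := (hsymm _ _).trans C02
  have C'12 : B (0, e1) (e2, 0) = 0 := (hsymm _ _).trans C21
  have C'21 : B (0, e2) (e1, 0) = 0 := (hsymm _ _).trans C12
  -- D values
  have D0 : ∀ z, B (0, e0) (0, z) = 0 := by intro z; have := hQ e1 e2 z; rwa [c12] at this
  have D1 : ∀ z, B (0, e1) (0, z) = 0 := by intro z; have := hQ e2 e0 z; rwa [c20] at this
  have D2 : ∀ z, B (0, e2) (0, z) = 0 := by intro z; have := hQ e0 e1 z; rwa [c01] at this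
  -- decomposition
  have key : ∀ ω v : Fin 3 → ℝ, ((ω, v) : (Fin 3 → ℝ) × (Fin 3 → ℝ)) =
      ω 0 • (e0, 0) + ω 1 • (e1, 0) + ω 2 • (e2, 0)
      + v 0 • ((0 : Fin 3 → ℝ), e0) + v 1 • ((0 : Fin 3 → ℝ), e1)
      + v 2 • ((0 : Fin 3 → ℝ), e2) := by
    intro ω v
    refine Prod.ext ?_ ?_ <;> funext i <;> fin_cases i <;>
      simp [he0, he1, he2]
  refine ⟨-a / 2, b, ?_⟩
  intro ω₁ v₁ ω₂ v₂
  rw [key ω₁ v₁, key ω₂ v₂]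
  simp only [map_add, _root_.map_smul, LinearMap.add_apply, LinearMap.smul_apply, smul_eq_mul]
  simp only [A00, A01, A02, A10, A11, A12, A20, A21, A22,
    C00, C01, C02, C10, C11, C12, C20, C21, C22,
    C'00, C'01, C'02, C'10, C'11, C'12, C'20, C'21, C'22,
    D0, D1, D2]
  simp only [dotProduct, Fin.sum_univ_three]
  ring
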